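/- arXiv:2203.06792 — 2 statements merged into one kernel-verified Lean document; each statement's English description precedes it below -/
import Mathlib

section
/- Let κ_1, κ_2 ∈ ℝ, e_x, e_y ∈ ℂ not both zero, and s ∈ ℂ with s ≠ 0. Define x_1 = e_x e^{iκ_1} s, x_2 = ((e_x+e_y)/√2) e^{iκ_2} s, x_3 = e_y e^{-iκ_1} s, x_4 = ((−e_x+e_y)/√2) e^{-iκ_2} s. Then c_1 := x_1 conj(x_2) + conj(x_3) x_4 = (|s|²/√2)(|e_x|² + |e_y|²) e^{i(κ_1-κ_2)}. In particular c_1 ≠ 0 and if κ_1 - κ_2 ∈ (-π, π] then arg c_1 = κ_1 - κ_2. -/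
open Complex

theorem stmt_7 (κ₁ κ₂ : ℝ) (ex ey : ℂ) (hne : ex ≠ 0 ∨ ey ≠ 0)
    (s : ℂ) (hs : s ≠ 0)
    (x₁ x₂ x₃ x₄ : ℂ)
    (hx₁ : x₁ = ex * Complex.exp (Complex.I * κ₁) * s)
    (hx₂ : x₂ = ((ex + ey) / Real.sqrt 2) * Complex.exp (Complex.I * κ₂) * s)
    (hx₃ : x₃ = ey * Complex.exp (-(Complex.I * κ₁)) * s)
    (hx₄ : x₄ = ((-ex + ey) / Real.sqrt 2) * Complex.exp (-(Complex.I * κ₂)) * s)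
    (c₁ : ℂ)
    (hc₁ : c₁ = x₁ * starRingEnd ℂ x₂ + starRingEnd ℂ x₃ * x₄) :
    c₁ = ((‖s‖ ^ 2 / Real.sqrt 2 : ℝ) : ℂ)
          * ((‖ex‖ ^ 2 + ‖ey‖ ^ 2 : ℝ) : ℂ)
          * Complex.exp (Complex.I * (κ₁ - κ₂ : ℝ)) ∧
    c₁ ≠ 0 ∧
    (κ₁ - κ₂ ∈ Set.Ioc (-Real.pi) Real.pi → Complex.arg c₁ = κ₁ - κ₂) := by
  have hmain : c₁ = ((‖s‖ ^ 2 / Real.sqrt 2 : ℝ) : ℂ)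
          * ((‖ex‖ ^ 2 + ‖ey‖ ^ 2 : ℝ) : ℂ)
          * Complex.exp (Complex.I * (κ₁ - κ₂ : ℝ)) := by
    subst hx₁ hx₂ hx₃ hx₄ hc₁
    have habs : ∀ z : ℂ, ((‖z‖ ^ 2 : ℝ) : ℂ) = z * starRingEnd ℂ z := by
      intro z; rw [Complex.mul_conj]; push_cast [Complex.sq_norm]; rfl
    simp only [map_mul, map_div₀, map_add, ← Complex.exp_conj, map_neg, Complex.conj_I,
      Complex.conj_ofReal, Complex.ofReal_div, Complex.ofReal_add, habs,
      neg_mul, neg_neg, Complex.exp_neg, mul_sub, Complex.exp_sub, map_inv₀,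
      Complex.ofReal_sub, inv_inv]
    field_simp [Complex.exp_ne_zero]
    ring
  have hr : (0:ℝ) < ‖s‖ ^ 2 / Real.sqrt 2 := by
    have h1 := norm_pos_iff.mpr hs
    have h2 : (0:ℝ) < Real.sqrt 2 := Real.sqrt_pos.mpr (by norm_num)
    positivity
  have he : (0:ℝ) < ‖ex‖ ^ 2 + ‖ey‖ ^ 2 := by
    rcases hne with h | h
    · have := norm_pos_iff.mpr h; positivity
    · have := norm_pos_iff.mpr h; positivity
  have hR : (0:ℝ) < ‖s‖ ^ 2 / Real.sqrt 2 * (‖ex‖ ^ 2 + ‖ey‖ ^ 2) :=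
    mul_pos hr he
  refine ⟨hmain, ?_, ?_⟩
  · rw [hmain]
    apply mul_ne_zero (mul_ne_zero ?_ ?_) (Complex.exp_ne_zero _)
    · exact_mod_cast hr.ne'
    · exact_mod_cast he.ne'
  · intro hmem
    rw [hmain, ← Complex.ofReal_mul, mul_comm Complex.I, Complex.exp_mul_I,
      Complex.arg_real_mul _ hR]
    exact Complex.arg_cos_add_sin_mul_I ⟨hmem.1, hmem.2⟩
end

section
/- Let κ_1, κ_2 ∈ ℝ, e_x, e_y ∈ ℂ not both zero, and s ∈ ℂ with s ≠ 0. Define x_1 = e_x e^{iκ_1} s, x_2 = ((e_x+e_y)/√2) e^{iκ_2} s, x_3 = e_y e^{-iκ_1} s, x_4 = ((−e_x+e_y)/√2) e^{-iκ_2} s. Then c_2 := −x_1 conj(x_4) + conj(x_3) x_2 = (|s|²/√2)(|e_x|² + |e_y|²) e^{i(κ_1+κ_2)}. In particular c_2 ≠ 0 and if κ_1 + κ_2 ∈ (-π, π] then arg c_2 = κ_1 + κ_2. -/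
open Complex

theorem stmt_8 (κ₁ κ₂ : ℝ) (ex ey : ℂ) (hne : ex ≠ 0 ∨ ey ≠ 0)
    (s : ℂ) (hs : s ≠ 0)
    (x₁ x₂ x₃ x₄ : ℂ)
    (hx₁ : x₁ = ex * Complex.exp (Complex.I * κ₁) * s)
    (hx₂ : x₂ = ((ex + ey) / Real.sqrt 2) * Complex.exp (Complex.I * κ₂) * s)
    (hx₃ : x₃ = ey * Complex.exp (-(Complex.I * κ₁)) * s)
    (hx₄ : x₄ = ((-ex + ey) / Real.sqrt 2) * Complex.exp (-(Complex.I * κ₂)) * s)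
    (c₂ : ℂ)
    (hc₂ : c₂ = -(x₁ * starRingEnd ℂ x₄) + starRingEnd ℂ x₃ * x₂) :
    c₂ = ((‖s‖ ^ 2 / Real.sqrt 2 : ℝ) : ℂ)
          * ((‖ex‖ ^ 2 + ‖ey‖ ^ 2 : ℝ) : ℂ)
          * Complex.exp (Complex.I * (κ₁ + κ₂ : ℝ)) ∧
    c₂ ≠ 0 ∧
    (κ₁ + κ₂ ∈ Set.Ioc (-Real.pi) Real.pi → Complex.arg c₂ = κ₁ + κ₂) := by
  have h2 : (Real.sqrt 2 : ℂ) ≠ 0 := by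
    exact_mod_cast Real.sqrt_ne_zero'.mpr (by norm_num)
  have habs : ∀ z : ℂ, z * starRingEnd ℂ z = ((‖z‖ : ℂ)) ^ 2 := fun z =>
    Complex.mul_conj' z
  have hmain : c₂ = ((‖s‖ ^ 2 / Real.sqrt 2 : ℝ) : ℂ)
          * ((‖ex‖ ^ 2 + ‖ey‖ ^ 2 : ℝ) : ℂ)
          * Complex.exp (Complex.I * (κ₁ + κ₂ : ℝ)) := by
    subst hx₁ hx₂ hx₃ hx₄ hc₂
    simp only [map_mul, map_div₀, ← Complex.exp_conj, map_neg, Complex.conj_I,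
      Complex.conj_ofReal, map_add, neg_neg, neg_mul]
    push_cast
    rw [show Complex.I * ((κ₁:ℂ) + (κ₂:ℂ)) = Complex.I * κ₁ + Complex.I * κ₂ by ring, Complex.exp_add]
    rw [← habs s, ← habs ex, ← habs ey]
    field_simp
    ring
  refine ⟨hmain, ?_, ?_⟩
  · rw [hmain]
    apply mul_ne_zero
    apply mul_ne_zero
    · rw [Ne, Complex.ofReal_eq_zero, div_eq_zero_iff]
      push_neg
      constructor
      · have := norm_pos_iff.mpr hs
        positivity
      · exact Real.sqrt_ne_zero'.mpr (by norm_num)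
    · rw [Ne, Complex.ofReal_eq_zero]
      rcases hne with h | h <;> · have := norm_pos_iff.mpr h; positivity
    · exact Complex.exp_ne_zero _
  · intro hmem
    rw [hmain, ← Complex.ofReal_mul]
    have hr : (0 : ℝ) < ‖s‖ ^ 2 / Real.sqrt 2 * (‖ex‖ ^ 2 + ‖ey‖ ^ 2) := by
      have hs' := norm_pos_iff.mpr hs
      have h1 : (0:ℝ) < ‖s‖ ^ 2 / Real.sqrt 2 := by positivity
      have h2 : (0:ℝ) < ‖ex‖ ^ 2 + ‖ey‖ ^ 2 := by
        rcases hne with h | h <;> · have := norm_pos_iff.mpr h; positivity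
      exact mul_pos h1 h2
    rw [Complex.arg_real_mul _ hr, mul_comm, Complex.exp_mul_I]
    exact Complex.arg_cos_add_sin_mul_I hmem
end
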